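/- Let φ be a reduction function on L, let p ∈ L be a proper element, and let b ∈ L be a compact element such that b^k is φ-δ₁-primary to p for every positive integer k and δ₁(φ(p)) = φ(δ₁(p)). Then √p is proper and b is φ-prime to √p. -/

import Mathlib

/-- A multiplicative lattice: a complete lattice with a commutative, associative
multiplication that distributes over arbitrary joins and whose greatest element `1`
is a multiplicative identity.  We also bundle the standing assumptions of the paper:
`L` is compactly generated, `1` is compact, and products of compact elements are
compact. -/
class MultiplicativeLattice (L : Type*) extends CompleteLattice L, CommMonoid L where
  mul_sSup : ∀ (a : L) (s : Set L), a * sSup s = ⨆ x ∈ s, a * x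
  one_eq_top : (1 : L) = ⊤
  compactly_generated : ∀ x : L, ∃ s : Set L,
    (∀ y ∈ s, IsCompactElement y) ∧ sSup s = x
  compact_one : IsCompactElement (1 : L)
  compact_mul : ∀ a b : L, IsCompactElement a →
    IsCompactElement b → IsCompactElement (a * b)

variable {L : Type*}

/-- An expansion function on `L`. -/
def IsExpansion [CompleteLattice L] (δ : L → L) : Prop :=
  (∀ a, a ≤ δ a) ∧ ∀ a b : L, a ≤ b → δ a ≤ δ b

/-- A reduction function on `L`. -/
def IsReduction [CompleteLattice L] (φ : L → L) : Prop :=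
  ∀ a, φ a ≤ a

/-- `b` is `φ`-`δ`-primary to `p`. -/
def PhiDeltaPrimaryTo [MultiplicativeLattice L] (φ δ : L → L) (b p : L) : Prop :=
  ∀ x : L, x * b ≤ p → ¬ x * b ≤ φ p → x ≤ δ p

/-- `b` is `δ`-primary to `p`. -/
def DeltaPrimaryTo [MultiplicativeLattice L] (δ : L → L) (b p : L) : Prop :=
  ∀ x : L, x * b ≤ p → x ≤ δ p

/-- `b` is `φ`-prime to `p`. -/
def PhiPrimeTo [MultiplicativeLattice L] (φ : L → L) (b p : L) : Prop :=
  ∀ x : L, x * b ≤ p → ¬ x * b ≤ φ p → x ≤ p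

/-- The radical `√q`: the join of all compact elements some positive power of which
lies below `q`.  This is the expansion function `δ₁`. -/
def mlRadical [MultiplicativeLattice L] (q : L) : L :=
  sSup {x : L | IsCompactElement x ∧ ∃ n : ℕ, 0 < n ∧ x ^ n ≤ q}

/-- The function `φ_ω(q) = ⋀_{n ≥ 1} qⁿ`. -/
def phiOmega [MultiplicativeLattice L] (q : L) : L := ⨅ n : ℕ, q ^ (n + 1)

/-- The mlResidual `(a : c)`, the join of all `x` with `x * c ≤ a`. -/
def mlResidual [MultiplicativeLattice L] (a c : L) : L := sSup {x : L | x * c ≤ a}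
section Aux

variable [MultiplicativeLattice L]

open CompleteLattice

lemma ml_mul_sup (a b c : L) : a * (b ⊔ c) = a * b ⊔ a * c := by
  have := MultiplicativeLattice.mul_sSup a {b, c}
  simpa [sSup_pair, iSup_or, iSup_sup_eq] using this

lemma ml_mul_le_mul_left {b c : L} (a : L) (h : b ≤ c) : a * b ≤ a * c := by
  have : a * c = a * b ⊔ a * c := by rw [← ml_mul_sup, sup_eq_right.mpr h]
  rw [this]; exact le_sup_left

lemma ml_mul_le_mul {a b c d : L} (h1 : a ≤ b) (h2 : c ≤ d) : a * c ≤ b * d := by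
  refine le_trans (ml_mul_le_mul_left a h2) ?_
  rw [mul_comm a d, mul_comm b d]
  exact ml_mul_le_mul_left d h1

lemma ml_mul_le_left (a b : L) : a * b ≤ a := by
  have : a * b ≤ a * 1 := ml_mul_le_mul_left a (by rw [MultiplicativeLattice.one_eq_top]; exact le_top)
  simpa using this

lemma ml_pow_le_pow {a b : L} (h : a ≤ b) (n : ℕ) : a ^ n ≤ b ^ n := by
  induction n with
  | zero => simp
  | succ k ih => rw [pow_succ, pow_succ]; exact ml_mul_le_mul ih h

lemma ml_pow_le_pow_of_le {a : L} {m n : ℕ} (h : m ≤ n) : a ^ n ≤ a ^ m := by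
  obtain ⟨k, rfl⟩ := Nat.exists_eq_add_of_le h
  rw [pow_add]; exact ml_mul_le_left _ _

lemma ml_sup_pow (a b : L) : ∀ m n : ℕ, (a ⊔ b) ^ (m + n) ≤ a ^ m ⊔ b ^ n := by
  intro m
  induction m with
  | zero =>
    intro n
    simp only [pow_zero, MultiplicativeLattice.one_eq_top, top_sup_eq, le_top]
  | succ k ih =>
    intro n
    induction n with
    | zero =>
      simp only [pow_zero, MultiplicativeLattice.one_eq_top, sup_top_eq, le_top]
    | succ j ihj =>
      have e : k + 1 + j = k + (j + 1) := by ring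
      rw [e] at ihj
      have expand : (a ⊔ b) ^ (k + 1 + (j + 1)) = a * (a ⊔ b) ^ (k + (j+1)) ⊔ b * (a ⊔ b) ^ (k + (j+1)) := by
        have h2 : k + 1 + (j + 1) = (k + (j + 1)) + 1 := by ring
        rw [h2, pow_succ, ml_mul_sup, mul_comm _ a, mul_comm _ b]
      rw [expand]
      apply sup_le
      · calc a * (a ⊔ b) ^ (k + (j+1)) ≤ a * (a ^ k ⊔ b ^ (j+1)) := ml_mul_le_mul_left a (ih (j+1))
          _ = a * a ^ k ⊔ a * b ^ (j+1) := ml_mul_sup _ _ _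
          _ ≤ a ^ (k+1) ⊔ b ^ (j+1) := by
              apply sup_le
              · rw [mul_comm, ← pow_succ]; exact le_sup_left
              · exact le_trans (by rw [mul_comm]; exact ml_mul_le_left _ _) le_sup_right
      · calc b * (a ⊔ b) ^ (k + (j+1)) ≤ b * (a ^ (k+1) ⊔ b ^ j) := ml_mul_le_mul_left b ihj
          _ = b * a ^ (k+1) ⊔ b * b ^ j := ml_mul_sup _ _ _
          _ ≤ a ^ (k+1) ⊔ b ^ (j+1) := by
              apply sup_le
              · exact le_trans (by rw [mul_comm]; exact ml_mul_le_left _ _) le_sup_left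
              · rw [mul_comm, ← pow_succ]; exact le_sup_right

lemma ml_finset_pow_le {q : L} (t : Finset L) (ht : ∀ x ∈ t, ∃ n : ℕ, 0 < n ∧ x ^ n ≤ q) :
    ∃ N : ℕ, 0 < N ∧ (t.sup id) ^ N ≤ q := by
  classical
  induction t using Finset.induction_on with
  | empty => exact ⟨1, Nat.one_pos, by simp⟩
  | insert a s hnotmem ih =>
    obtain ⟨n, hn, hna⟩ := ht a (Finset.mem_insert_self a s)
    obtain ⟨N, hN, hNs⟩ := ih (fun x hx => ht x (Finset.mem_insert_of_mem hx))
    refine ⟨n + N, Nat.add_pos_left hn N, ?_⟩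
    rw [Finset.sup_insert]
    calc (id a ⊔ s.sup id) ^ (n + N) ≤ a ^ n ⊔ (s.sup id) ^ N := ml_sup_pow _ _ _ _
      _ ≤ q := sup_le hna hNs

lemma ml_compact_le_radical {c q : L} (hc : IsCompactElement c) (h : c ≤ mlRadical q) :
    ∃ N : ℕ, 0 < N ∧ c ^ N ≤ q := by
  obtain ⟨t, hts, hct⟩ := (isCompactElement_iff_exists_le_sSup_of_le_sSup (k := c)).mp hc _ h
  obtain ⟨N, hN, hNq⟩ := ml_finset_pow_le t (fun x hx => (hts hx).2)
  exact ⟨N, hN, le_trans (ml_pow_le_pow hct N) hNq⟩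

lemma ml_le_radical_of_pow {c q : L} (hc : IsCompactElement c) {n : ℕ} (hn : 0 < n)
    (h : c ^ n ≤ q) : c ≤ mlRadical q :=
  le_sSup ⟨hc, n, hn, h⟩

lemma ml_compact_pow {a : L} (ha : IsCompactElement a) (n : ℕ) :
    IsCompactElement (a ^ n) := by
  induction n with
  | zero => simpa using MultiplicativeLattice.compact_one
  | succ k ih => rw [pow_succ]; exact MultiplicativeLattice.compact_mul _ _ ih ha

lemma ml_compact_sup {a b : L} (ha : IsCompactElement a) (hb : IsCompactElement b) :
    IsCompactElement (a ⊔ b) := by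
  classical
  have := isCompactElement_finsetSup (f := (id : L → L)) {a, b}
    (by intro x hx; simp only [Finset.mem_insert, Finset.mem_singleton] at hx
        rcases hx with rfl | rfl <;> assumption)
  simpa using this

end Aux

theorem phiPrime_radical_of_pow_phiDeltaOnePrimary [MultiplicativeLattice L]
    (φ : L → L) (hφ : IsReduction φ) (p : L) (hp : p < 1)
    (b : L) (hb : IsCompactElement b)
    (h : ∀ k : ℕ, 0 < k → PhiDeltaPrimaryTo φ mlRadical (b ^ k) p)
    (hcomm : mlRadical (φ p) = φ (mlRadical p)) :
    mlRadical p < 1 ∧ PhiPrimeTo φ b (mlRadical p) := by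
  have hrad_proper : mlRadical p < 1 := by
    rw [MultiplicativeLattice.one_eq_top, lt_top_iff_ne_top]
    intro htop
    have h1 : (1 : L) ≤ mlRadical p := by
      rw [htop, ← MultiplicativeLattice.one_eq_top]
    obtain ⟨N, hN, hNp⟩ := ml_compact_le_radical MultiplicativeLattice.compact_one h1
    rw [one_pow] at hNp
    exact absurd (lt_of_lt_of_le hp hNp) (lt_irrefl p)
  refine ⟨hrad_proper, ?_⟩
  intro x hx hnx
  obtain ⟨s, hs_comp, hs_sup⟩ := MultiplicativeLattice.compactly_generated x
  -- x * b = ⨆ y ∈ s, y * b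
  have hxb : x * b = ⨆ y ∈ s, b * y := by
    rw [mul_comm, ← hs_sup]
    exact MultiplicativeLattice.mul_sSup b s
  -- there is y₀ ∈ s with ¬ y₀ * b ≤ φ (mlRadical p)
  have hy0 : ∃ y₀ ∈ s, ¬ y₀ * b ≤ φ (mlRadical p) := by
    by_contra hcon
    push_neg at hcon
    apply hnx
    rw [hxb]
    exact iSup₂_le fun y hy => by rw [mul_comm]; exact hcon y hy
  obtain ⟨y₀, hy₀s, hy₀⟩ := hy0
  have key : ∀ y ∈ s, y ≤ mlRadical p := by
    intro y hys
    set z := y ⊔ y₀ with hz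
    have hzc : IsCompactElement z :=
      ml_compact_sup (hs_comp y hys) (hs_comp y₀ hy₀s)
    have hzx : z ≤ x := by
      rw [← hs_sup]; exact sup_le (le_sSup hys) (le_sSup hy₀s)
    have hzb_le : z * b ≤ mlRadical p := by
      calc z * b ≤ x * b := ml_mul_le_mul hzx le_rfl
        _ ≤ mlRadical p := hx
    have hzbc : IsCompactElement (z * b) :=
      MultiplicativeLattice.compact_mul _ _ hzc hb
    obtain ⟨N, hN, hNle⟩ := ml_compact_le_radical hzbc hzb_le
    rw [mul_pow] at hNle
    have hnot : ¬ z ^ N * b ^ N ≤ φ p := by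
      intro hle
      have : (z * b) ^ N ≤ φ p := by rw [mul_pow]; exact hle
      have hzb_rad : z * b ≤ mlRadical (φ p) :=
        ml_le_radical_of_pow hzbc hN this
      rw [hcomm] at hzb_rad
      exact hy₀ (le_trans (ml_mul_le_mul le_sup_right le_rfl) hzb_rad)
    have hzN : z ^ N ≤ mlRadical p := h N hN (z ^ N) hNle hnot
    obtain ⟨M, hM, hMle⟩ := ml_compact_le_radical (ml_compact_pow hzc N) hzN
    rw [← pow_mul] at hMle
    have hzrad : z ≤ mlRadical p :=
      ml_le_radical_of_pow hzc (Nat.mul_pos hN hM) hMle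
    exact le_trans le_sup_left hzrad
  rw [← hs_sup]
  exact sSup_le key
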